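/- Let μ, L > 0 with μ ≤ L, let γ = η ∈ (0, 1/L], and let H be any symmetric matrix with μI ⪯ H ⪯ LI. Define the 2d×2d block matrix A = (1/(1+ημ))·[[I − ηH, ημ(I − ηH)], [−η(H − μI), I − η²μH]] and the transformation X = [[(η/γ)I, 0],[I, I]] = [[I, 0],[I, I]] (since γ = η). Then ‖X⁻¹ A X‖₂ ≤ 1. -/

import Mathlib

open Matrix

/-- The ℓ²-operator (spectral) norm of a square real matrix. -/
noncomputable def opNorm {n : Type*} [Fintype n] [DecidableEq n]
    (A : Matrix n n ℝ) : ℝ :=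
  ‖Matrix.toEuclideanCLM (𝕜 := ℝ) A‖

/-- The matrix `A(μ, γ, η, H)` of the FedAc stability recursion with `γ = η`. -/
noncomputable def Amat {d : ℕ} (μ η : ℝ) (H : Matrix (Fin d) (Fin d) ℝ) :
    Matrix (Fin d ⊕ Fin d) (Fin d ⊕ Fin d) ℝ :=
  (1 / (1 + η * μ)) •
    Matrix.fromBlocks (1 - η • H) ((η * μ) • (1 - η • H))
      (-(η • (H - μ • (1 : Matrix (Fin d) (Fin d) ℝ)))) (1 - (η ^ 2 * μ) • H)

/-- The transformation `X = [[I, 0], [I, I]]` (the case `γ = η` of `X(γ,η)`). -/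
noncomputable def Xmat (d : ℕ) : Matrix (Fin d ⊕ Fin d) (Fin d ⊕ Fin d) ℝ :=
  Matrix.fromBlocks (1 : Matrix (Fin d) (Fin d) ℝ) (0 : Matrix (Fin d) (Fin d) ℝ)
    (1 : Matrix (Fin d) (Fin d) ℝ) (1 : Matrix (Fin d) (Fin d) ℝ)

open scoped Matrix.Norms.L2Operator

section Aux

lemma aux_euclid_norm_sq {m : Type*} [Fintype m] (x : EuclideanSpace ℝ m) :
    ‖x‖ ^ 2 = ∑ i, x i ^ 2 := by
  rw [EuclideanSpace.norm_eq, Real.sq_sqrt (by positivity)]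
  simp [Real.norm_eq_abs, sq_abs]

lemma aux_mulVec_sum_sq_le {m : Type*} [Fintype m] [DecidableEq m]
    (A : Matrix m m ℝ) (u : m → ℝ) :
    ∑ i, (A *ᵥ u) i ^ 2 ≤ ‖A‖ ^ 2 * ∑ i, u i ^ 2 := by
  have h := A.l2_opNorm_mulVec ((WithLp.equiv 2 (m → ℝ)).symm u)
  have h1 : ‖(EuclideanSpace.equiv m ℝ).symm (A *ᵥ (WithLp.equiv 2 (m → ℝ)).symm u)‖ ^ 2
      = ∑ i, (A *ᵥ u) i ^ 2 := aux_euclid_norm_sq _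
  have h2 : ‖((WithLp.equiv 2 (m → ℝ)).symm u)‖ ^ 2 = ∑ i, u i ^ 2 := aux_euclid_norm_sq _
  nlinarith [norm_nonneg ((WithLp.equiv 2 (m → ℝ)).symm u), norm_nonneg A,
    norm_nonneg ((EuclideanSpace.equiv m ℝ).symm (A *ᵥ (WithLp.equiv 2 (m → ℝ)).symm u))]

lemma aux_opnorm_le_of_mulVec {m : Type*} [Fintype m] [DecidableEq m]
    (M : Matrix m m ℝ) (K : ℝ) (hK : 0 ≤ K)
    (h : ∀ x : m → ℝ, ∑ i, (M *ᵥ x) i ^ 2 ≤ K ^ 2 * ∑ i, x i ^ 2) :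
    ‖M‖ ≤ K := by
  rw [l2_opNorm_def]
  refine ContinuousLinearMap.opNorm_le_bound _ hK fun x => ?_
  show ‖(EuclideanSpace.equiv m ℝ).symm (M *ᵥ x)‖ ≤ K * ‖x‖
  have h1 : ‖(EuclideanSpace.equiv m ℝ).symm (M *ᵥ x)‖ ^ 2
      = ∑ i, (M *ᵥ x) i ^ 2 := aux_euclid_norm_sq _
  have h2 : ‖x‖ ^ 2 = ∑ i, x i ^ 2 := aux_euclid_norm_sq _
  have h3 := h x
  nlinarith [norm_nonneg (x : EuclideanSpace ℝ m),
    norm_nonneg ((EuclideanSpace.equiv m ℝ).symm (M *ᵥ x)),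
    mul_nonneg hK (norm_nonneg (x : EuclideanSpace ℝ m))]

lemma aux_norm_fromBlocks_diag_le {m : Type*} [Fintype m] [DecidableEq m]
    (A D : Matrix m m ℝ) :
    ‖(fromBlocks A 0 0 D : Matrix (m ⊕ m) (m ⊕ m) ℝ)‖ ≤ max ‖A‖ ‖D‖ := by
  refine aux_opnorm_le_of_mulVec _ _ (le_max_of_le_left (norm_nonneg A)) fun x => ?_
  rw [fromBlocks_mulVec]
  simp only [zero_mulVec, add_zero, zero_add]
  rw [Fintype.sum_sum_type, Fintype.sum_sum_type]
  simp only [Sum.elim_inl, Sum.elim_inr]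
  have h1 := aux_mulVec_sum_sq_le A (x ∘ Sum.inl)
  have h2 := aux_mulVec_sum_sq_le D (x ∘ Sum.inr)
  have hA : ‖A‖ ≤ max ‖A‖ ‖D‖ := le_max_left _ _
  have hD : ‖D‖ ≤ max ‖A‖ ‖D‖ := le_max_right _ _
  have s1 : (0:ℝ) ≤ ∑ i, (x ∘ Sum.inl) i ^ 2 := by positivity
  have s2 : (0:ℝ) ≤ ∑ i, (x ∘ Sum.inr) i ^ 2 := by positivity
  simp only [Function.comp_apply] at h1 h2 s1 s2 ⊢
  have k1 := mul_le_mul_of_nonneg_right (pow_le_pow_left₀ (norm_nonneg A) hA 2) s1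
  have k2 := mul_le_mul_of_nonneg_right (pow_le_pow_left₀ (norm_nonneg D) hD 2) s2
  linarith

lemma aux_norm_fromBlocks_offdiag_le {m : Type*} [Fintype m] [DecidableEq m]
    (B : Matrix m m ℝ) :
    ‖(fromBlocks 0 B 0 0 : Matrix (m ⊕ m) (m ⊕ m) ℝ)‖ ≤ ‖B‖ := by
  refine aux_opnorm_le_of_mulVec _ _ (norm_nonneg B) fun x => ?_
  rw [fromBlocks_mulVec]
  simp only [zero_mulVec, add_zero, zero_add]
  rw [Fintype.sum_sum_type, Fintype.sum_sum_type]
  simp only [Sum.elim_inl, Sum.elim_inr, Pi.zero_apply]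
  have h1 := aux_mulVec_sum_sq_le B (x ∘ Sum.inr)
  have s1 : (0:ℝ) ≤ ∑ i, (x ∘ Sum.inl) i ^ 2 := by positivity
  simp only [Function.comp_apply, pow_two, mul_zero, Finset.sum_const_zero] at h1 s1 ⊢
  have k1 : (0:ℝ) ≤ ‖B‖ * ‖B‖ * ∑ i, x (Sum.inl i) * x (Sum.inl i) := by positivity
  linarith

lemma aux_psd_smul {m : Type*} [Fintype m] {c : ℝ} (hc : 0 ≤ c) {A : Matrix m m ℝ}
    (hA : A.PosSemidef) : (c • A).PosSemidef := by
  refine PosSemidef.of_dotProduct_mulVec_nonneg ?_ fun x => ?_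
  · show (c • A)ᴴ = c • A
    rw [conjTranspose_smul, star_trivial, hA.1.eq]
  · rw [smul_mulVec, dotProduct_smul, smul_eq_mul]
    exact mul_nonneg hc (hA.dotProduct_mulVec_nonneg x)

lemma aux_psd_sq_le {m : Type*} [Fintype m] [DecidableEq m] {P : Matrix m m ℝ} (t : ℝ)
    (hP : P.PosSemidef) (ht : ((t : ℝ) • (1 : Matrix m m ℝ) - P).PosSemidef) :
    (t • P - P * P).PosSemidef := by
  obtain ⟨S, hS, hSS⟩ : ∃ S : Matrix m m ℝ, S.PosSemidef ∧ S * S = P :=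
    by open scoped MatrixOrder in exact ⟨CFC.sqrt P, (CFC.sqrt_nonneg P).posSemidef, CFC.sqrt_mul_sqrt_self P hP.nonneg⟩
  have key : S * ((t : ℝ) • (1 : Matrix m m ℝ) - P) * Sᴴ = t • P - P * P := by
    rw [hS.1.eq, mul_sub, sub_mul, mul_smul_comm, smul_mul_assoc, mul_one, hSS, ← hSS]
    simp [mul_assoc]
  exact key ▸ ht.mul_mul_conjTranspose_same S

lemma aux_psd_mulVec_sq {m : Type*} [Fintype m] [DecidableEq m] {P : Matrix m m ℝ} {t : ℝ}
    (ht0 : 0 ≤ t) (hP : P.PosSemidef) (ht : ((t : ℝ) • (1 : Matrix m m ℝ) - P).PosSemidef)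
    (x : m → ℝ) : ∑ i, (P *ᵥ x) i ^ 2 ≤ t ^ 2 * ∑ i, x i ^ 2 := by
  have h1 := (aux_psd_sq_le t hP ht).dotProduct_mulVec_nonneg x
  have h2 := ht.dotProduct_mulVec_nonneg x
  have h3 := hP.dotProduct_mulVec_nonneg x
  simp only [star_trivial, sub_mulVec, smul_mulVec, dotProduct_sub, dotProduct_smul,
    one_mulVec, smul_eq_mul] at h1 h2 h3
  have hsym : Pᵀ = P := by
    rw [← Matrix.conjTranspose_eq_transpose_of_trivial]; exact hP.1
  have e1 : ∑ i, (P *ᵥ x) i ^ 2 = (P *ᵥ x) ⬝ᵥ (P *ᵥ x) := by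
    simp [dotProduct, pow_two]
  have e2 : (P *ᵥ x) ⬝ᵥ (P *ᵥ x) = x ⬝ᵥ ((P * P) *ᵥ x) := by
    rw [dotProduct_mulVec, ← mulVec_transpose, hsym, mulVec_mulVec, dotProduct_comm]
  have e3 : x ⬝ᵥ x = ∑ i, x i ^ 2 := by simp [dotProduct, pow_two]
  rw [e1, e2]
  nlinarith [h1, h2, h3]

lemma aux_psd_norm_le {m : Type*} [Fintype m] [DecidableEq m] {P : Matrix m m ℝ} {t : ℝ}
    (ht0 : 0 ≤ t) (hP : P.PosSemidef) (ht : ((t : ℝ) • (1 : Matrix m m ℝ) - P).PosSemidef) :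
    ‖P‖ ≤ t :=
  aux_opnorm_le_of_mulVec _ _ ht0 (aux_psd_mulVec_sq ht0 hP ht)

lemma aux_norm_one_le {m : Type*} [Fintype m] [DecidableEq m] :
    ‖(1 : Matrix m m ℝ)‖ ≤ 1 := by
  rw [Matrix.cstar_norm_def, _root_.map_one]
  exact ContinuousLinearMap.norm_id_le

lemma aux_Xinv (d : ℕ) : (Xmat d)⁻¹ =
    Matrix.fromBlocks (1 : Matrix (Fin d) (Fin d) ℝ) 0 (-1) 1 := by
  apply Matrix.inv_eq_right_inv
  rw [Xmat, fromBlocks_multiply]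
  simp [← fromBlocks_one]

lemma aux_conj_eq {d : ℕ} (μ η : ℝ) (H : Matrix (Fin d) (Fin d) ℝ) :
    (Xmat d)⁻¹ * Amat μ η H * Xmat d =
      (1 / (1 + η * μ)) •
        Matrix.fromBlocks ((1 + η * μ) • (1 - η • H)) ((η * μ) • (1 - η • H)) 0
          ((1 - η * μ) • (1 : Matrix (Fin d) (Fin d) ℝ)) := by
  rw [aux_Xinv, Amat, Xmat, mul_smul_comm, smul_mul_assoc]
  congr 1
  rw [fromBlocks_multiply, fromBlocks_multiply]
  refine fromBlocks_inj.mpr ⟨?_, ?_, ?_, ?_⟩ <;>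
    (try simp only [Matrix.mul_one, Matrix.mul_zero, Matrix.one_mul, Matrix.neg_mul,
      Matrix.zero_mul, add_zero, zero_add]) <;>
    module

end Aux

/-- For `0 < μ ≤ L`, `0 < η ≤ 1/L`, and any symmetric `H` with `μI ⪯ H ⪯ LI`,
the conjugated recursion matrix satisfies `‖X⁻¹ A X‖₂ ≤ 1` (case `γ = η`). -/
theorem stmt_18 {d : ℕ} (μ L η : ℝ) (hμ : 0 < μ) (hμL : μ ≤ L) (hη : 0 < η)
    (hηL : η ≤ 1 / L) (H : Matrix (Fin d) (Fin d) ℝ) (hsymm : H.IsSymm)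
    (hlow : (H - μ • (1 : Matrix (Fin d) (Fin d) ℝ)).PosSemidef)
    (hupp : (L • (1 : Matrix (Fin d) (Fin d) ℝ) - H).PosSemidef) :
    opNorm ((Xmat d)⁻¹ * Amat μ η H * Xmat d) ≤ 1 := by
  have hL : 0 < L := lt_of_lt_of_le hμ hμL
  have hηL1 : η * L ≤ 1 := by
    have := (le_div_iff₀ hL).mp hηL; linarith
  have hημ0 : 0 < η * μ := mul_pos hη hμ
  have hημ1 : η * μ ≤ 1 := by nlinarith
  have h1ημ : (0:ℝ) < 1 + η * μ := by linarith
  set B : Matrix (Fin d) (Fin d) ℝ := 1 - η • H with hBdef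
  -- B is PSD
  have hBpsd : B.PosSemidef := by
    have h1 : (η • (L • (1 : Matrix (Fin d) (Fin d) ℝ) - H)).PosSemidef :=
      aux_psd_smul hη.le hupp
    have h2 : ((1 - η * L) • (1 : Matrix (Fin d) (Fin d) ℝ)).PosSemidef :=
      aux_psd_smul (by linarith) Matrix.PosSemidef.one
    have he : B = η • (L • (1 : Matrix (Fin d) (Fin d) ℝ) - H)
        + (1 - η * L) • (1 : Matrix (Fin d) (Fin d) ℝ) := by
      rw [hBdef]; module
    rw [he]; exact h1.add h2
  -- (1 - ημ) • 1 - B is PSD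
  have hBupp : ((1 - η * μ) • (1 : Matrix (Fin d) (Fin d) ℝ) - B).PosSemidef := by
    have h1 : (η • (H - μ • (1 : Matrix (Fin d) (Fin d) ℝ))).PosSemidef :=
      aux_psd_smul hη.le hlow
    have he : (1 - η * μ) • (1 : Matrix (Fin d) (Fin d) ℝ) - B
        = η • (H - μ • (1 : Matrix (Fin d) (Fin d) ℝ)) := by
      rw [hBdef]; module
    rw [he]; exact h1
  have hBnorm : ‖B‖ ≤ 1 - η * μ := aux_psd_norm_le (by linarith) hBpsd hBupp
  -- rewrite the conjugated matrix
  have hM : opNorm ((Xmat d)⁻¹ * Amat μ η H * Xmat d)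
      = ‖(Xmat d)⁻¹ * Amat μ η H * Xmat d‖ := rfl
  rw [hM, aux_conj_eq]
  rw [norm_smul, Real.norm_eq_abs, abs_of_pos (by positivity : (0:ℝ) < 1 / (1 + η * μ))]
  -- split into diagonal and off-diagonal parts
  have hsplit : (Matrix.fromBlocks ((1 + η * μ) • B) ((η * μ) • B) 0
        ((1 - η * μ) • (1 : Matrix (Fin d) (Fin d) ℝ))
        : Matrix (Fin d ⊕ Fin d) (Fin d ⊕ Fin d) ℝ)
      = Matrix.fromBlocks ((1 + η * μ) • B) 0 0
          ((1 - η * μ) • (1 : Matrix (Fin d) (Fin d) ℝ))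
        + Matrix.fromBlocks 0 ((η * μ) • B) 0 0 := by
    rw [fromBlocks_add]; simp
  rw [hsplit]
  have hnorm1 : ‖(Matrix.fromBlocks ((1 + η * μ) • B) 0 0
        ((1 - η * μ) • (1 : Matrix (Fin d) (Fin d) ℝ))
        : Matrix (Fin d ⊕ Fin d) (Fin d ⊕ Fin d) ℝ)‖
      ≤ (1 + η * μ) * (1 - η * μ) := by
    refine le_trans (aux_norm_fromBlocks_diag_le _ _) (max_le ?_ ?_)
    · rw [norm_smul, Real.norm_eq_abs, abs_of_pos h1ημ]
      exact mul_le_mul_of_nonneg_left hBnorm h1ημ.le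
    · rw [norm_smul, Real.norm_eq_abs, abs_of_nonneg (by linarith : (0:ℝ) ≤ 1 - η * μ)]
      have h1 := aux_norm_one_le (m := Fin d)
      nlinarith [norm_nonneg (1 : Matrix (Fin d) (Fin d) ℝ)]
  have hnorm2 : ‖(Matrix.fromBlocks 0 ((η * μ) • B) 0 0
        : Matrix (Fin d ⊕ Fin d) (Fin d ⊕ Fin d) ℝ)‖
      ≤ (η * μ) * (1 - η * μ) := by
    refine le_trans (aux_norm_fromBlocks_offdiag_le _) ?_
    rw [norm_smul, Real.norm_eq_abs, abs_of_pos hημ0]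
    exact mul_le_mul_of_nonneg_left hBnorm hημ0.le
  have htri := norm_add_le (Matrix.fromBlocks ((1 + η * μ) • B) 0 0
        ((1 - η * μ) • (1 : Matrix (Fin d) (Fin d) ℝ))
        : Matrix (Fin d ⊕ Fin d) (Fin d ⊕ Fin d) ℝ)
      (Matrix.fromBlocks 0 ((η * μ) • B) 0 0
        : Matrix (Fin d ⊕ Fin d) (Fin d ⊕ Fin d) ℝ)
  have hfinal : (1 / (1 + η * μ)) * ((1 + η * μ) * (1 - η * μ) + (η * μ) * (1 - η * μ)) ≤ 1 := by
    rw [div_mul_eq_mul_div, one_mul, div_le_one h1ημ]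
    nlinarith
  calc (1 / (1 + η * μ)) * ‖_ + _‖
      ≤ (1 / (1 + η * μ)) * ((1 + η * μ) * (1 - η * μ) + (η * μ) * (1 - η * μ)) := by
        have : (0:ℝ) ≤ 1 / (1 + η * μ) := by positivity
        apply mul_le_mul_of_nonneg_left _ this
        linarith
    _ ≤ 1 := hfinal
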